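/- Let A, B : Matrix (Fin d) (Fin d) ℂ with A having nonnegative real entries, B Hermitian, B i i = A i i for all i, and A i j · A j i ≥ |B i j|² for all i, j. Let J : Matrix (Fin d × Fin d) (Fin d × Fin d) ℂ be the Choi matrix of the DUC map, defined by J (i,j) (i,j) = A i j for all i,j, J (i,j) (j,i) = B i j for i ≠ j, and all other entries 0. Then rank J = #{i : A i i ≠ 0} + ∑_{i<j} rank of the 2×2 matrix [[A i j, B i j],[B j i, A j i]]. -/

import Mathlib

open Matrix

/-- The Choi matrix of the DUC map associated with matrices `A`, `B`. -/
def ducChoi {d : ℕ} (A B : Matrix (Fin d) (Fin d) ℂ) :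
    Matrix (Fin d × Fin d) (Fin d × Fin d) ℂ :=
  Matrix.of fun p q =>
    if q = p then A p.1 p.2
    else if q = (p.2, p.1) then B p.1 p.2
    else 0

noncomputable section DucAux

/-- Product of submodules is linearly equivalent to `Submodule.pi`. -/
def piSubEquiv {ι : Type*} {φ : ι → Type*} [∀ i, AddCommGroup (φ i)]
    [∀ i, Module ℂ (φ i)] (p : ∀ i, Submodule ℂ (φ i)) :
    (∀ i, p i) ≃ₗ[ℂ] (Submodule.pi Set.univ p) where
  toFun x := ⟨fun i => (x i : φ i), fun i _ => (x i).2⟩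
  invFun y i := ⟨y.1 i, y.2 i (Set.mem_univ i)⟩
  map_add' _ _ := rfl
  map_smul' _ _ := rfl
  left_inv _ := rfl
  right_inv _ := rfl

theorem rank_blockDiagonal'
    {ι : Type*} [Fintype ι] [DecidableEq ι]
    {n : ι → Type*} [∀ i, Fintype (n i)] [∀ i, DecidableEq (n i)]
    (M : ∀ i, Matrix (n i) (n i) ℂ) :
    (Matrix.blockDiagonal' M).rank = ∑ i, (M i).rank := by
  classical
  have key : ∀ (x : (Σ i, n i) → ℂ) (i : ι) (a : n i),
      (blockDiagonal' M).mulVec x ⟨i, a⟩ = (M i).mulVec (fun b => x ⟨i, b⟩) a := by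
    intro x i a
    simp only [Matrix.mulVec, dotProduct]
    rw [← Finset.univ_sigma_univ, Finset.sum_sigma]
    rw [Fintype.sum_eq_single i]
    · apply Finset.sum_congr rfl
      intro b _
      rw [Matrix.blockDiagonal'_apply_eq]
    · intro j hj
      apply Finset.sum_eq_zero
      intro b _
      rw [Matrix.blockDiagonal'_apply_ne _ _ _ (Ne.symm hj), zero_mul]
  let e : ((Σ i, n i) → ℂ) ≃ₗ[ℂ] (∀ i, n i → ℂ) :=
    LinearEquiv.piCurry ℂ (fun (i : ι) (_ : n i) => ℂ)
  have hrange : Submodule.map (e : ((Σ i, n i) → ℂ) →ₗ[ℂ] (∀ i, n i → ℂ)) (LinearMap.range (blockDiagonal' M).mulVecLin) =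
      Submodule.pi Set.univ (fun i => LinearMap.range (M i).mulVecLin) := by
    ext y
    simp only [Submodule.mem_map, LinearMap.mem_range, Submodule.mem_pi, Set.mem_univ,
      forall_true_left]
    constructor
    · rintro ⟨-, ⟨x, rfl⟩, rfl⟩ i
      refine ⟨fun b => x ⟨i, b⟩, ?_⟩
      funext a
      exact (key x i a).symm
    · intro h
      choose z hz using h
      refine ⟨(blockDiagonal' M).mulVecLin (Sigma.uncurry z), ⟨_, rfl⟩, ?_⟩
      funext i a
      show (blockDiagonal' M).mulVec (Sigma.uncurry z) ⟨i, a⟩ = y i a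
      rw [key, ← hz i]
      rfl
  rw [Matrix.rank, ← LinearEquiv.finrank_map_eq e]
  erw [hrange]
  rw [← (piSubEquiv (fun i => LinearMap.range (M i).mulVecLin)).finrank_eq, Module.finrank_pi_fintype]
  simp [Matrix.rank]

variable {d : ℕ}

abbrev BlkIdx (d : ℕ) : Type := Fin d ⊕ {p : Fin d × Fin d // p.1 < p.2}

@[reducible] def blkSize : BlkIdx d → ℕ := Sum.elim (fun _ => 1) (fun _ => 2)

def blkTo (d : ℕ) : (Σ s : BlkIdx d, Fin (blkSize s)) → Fin d × Fin d :=
  fun x => Sum.rec (motive := fun s => Fin (blkSize s) → Fin d × Fin d)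
    (fun i _ => (i, i))
    (fun p => ![(p.1.1, p.1.2), (p.1.2, p.1.1)]) x.1 x.2

def blkInv (d : ℕ) : Fin d × Fin d → (Σ s : BlkIdx d, Fin (blkSize s)) :=
  fun q =>
    if h : q.1 = q.2 then ⟨Sum.inl q.1, (0 : Fin 1)⟩
    else if h' : q.1 < q.2 then ⟨Sum.inr ⟨q, h'⟩, (0 : Fin 2)⟩
    else ⟨Sum.inr ⟨(q.2, q.1), lt_of_le_of_ne (not_lt.mp h') (Ne.symm h)⟩, (1 : Fin 2)⟩

def blkEquiv (d : ℕ) : (Σ s : BlkIdx d, Fin (blkSize s)) ≃ Fin d × Fin d where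
  toFun := blkTo d
  invFun := blkInv d
  left_inv := by
    rintro ⟨s, k⟩
    rcases s with i | ⟨⟨a, b⟩, hab⟩
    · have h1 : blkInv d (blkTo d ⟨Sum.inl i, k⟩) = ⟨Sum.inl i, (0 : Fin 1)⟩ := dif_pos rfl
      rw [h1]
      exact Sigma.ext rfl (heq_of_eq (Subsingleton.elim (α := Fin 1) 0 k))
    · simp only at hab
      fin_cases k
      · simp [blkTo, blkInv, ne_of_lt hab, hab]
      · simp [blkTo, blkInv, (ne_of_lt hab).symm, not_lt.mpr (le_of_lt hab)]
  right_inv := by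
    rintro ⟨a, b⟩
    by_cases h : a = b
    · subst h
      have h1 : blkInv d (a, a) = ⟨Sum.inl a, (0 : Fin 1)⟩ := dif_pos rfl
      rw [h1]; rfl
    · by_cases h' : a < b
      · have h1 : blkInv d (a, b) = ⟨Sum.inr ⟨(a, b), h'⟩, (0 : Fin 2)⟩ := by
          unfold blkInv; rw [dif_neg h, dif_pos h']
        rw [h1]; rfl
      · have h1 : blkInv d (a, b) =
            ⟨Sum.inr ⟨(b, a), lt_of_le_of_ne (not_lt.mp h') (Ne.symm h)⟩, (1 : Fin 2)⟩ := by
          unfold blkInv; rw [dif_neg h, dif_neg h']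
        rw [h1]; rfl

def blkMat (A B : Matrix (Fin d) (Fin d) ℂ) :
    ∀ s : BlkIdx d, Matrix (Fin (blkSize s)) (Fin (blkSize s)) ℂ :=
  fun s => Sum.rec (motive := fun s => Matrix (Fin (blkSize s)) (Fin (blkSize s)) ℂ)
    (fun i => !![A i i])
    (fun p => !![A p.1.1 p.1.2, B p.1.1 p.1.2; B p.1.2 p.1.1, A p.1.2 p.1.1]) s

lemma duc_eq (A B : Matrix (Fin d) (Fin d) ℂ) :
    (ducChoi A B).submatrix (blkEquiv d) (blkEquiv d) = blockDiagonal' (blkMat A B) := by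
  ext ⟨s, k⟩ ⟨t, l⟩
  show ducChoi A B (blkTo d ⟨s, k⟩) (blkTo d ⟨t, l⟩) = _
  rcases s with i | ⟨⟨a, b⟩, hab⟩ <;> rcases t with j | ⟨⟨c, e⟩, hce⟩
  · by_cases h : i = j
    · subst h
      rw [Matrix.blockDiagonal'_apply_eq]
      have h0 : ducChoi A B (blkTo d ⟨Sum.inl i, k⟩) (blkTo d ⟨Sum.inl i, l⟩) = A i i :=
        if_pos rfl
      rw [h0]
      rw [Subsingleton.elim (α := Fin 1) k 0, Subsingleton.elim (α := Fin 1) l 0]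
      rfl
    · rw [Matrix.blockDiagonal'_apply_ne _ _ _ (fun hs => h (Sum.inl.inj hs))]
      show ducChoi A B (i, i) (j, j) = 0
      have hne : ((j, j) : Fin d × Fin d) ≠ (i, i) := fun hh => h (congrArg Prod.fst hh).symm
      simp [ducChoi, hne]
  · rw [Matrix.blockDiagonal'_apply_ne _ _ _ (by simp)]
    have hce' : c ≠ e := ne_of_lt hce
    have n1 : ¬(c = i ∧ e = i) := by rintro ⟨rfl, rfl⟩; exact hce' rfl
    have n2 : ¬(e = i ∧ c = i) := by rintro ⟨rfl, rfl⟩; exact hce' rfl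
    fin_cases l <;>
    · show ducChoi A B (i, i) _ = 0
      simp [ducChoi, blkTo, Prod.ext_iff, n1, n2]
  · rw [Matrix.blockDiagonal'_apply_ne _ _ _ (by simp)]
    have hab' : a ≠ b := ne_of_lt hab
    have n1 : ¬(j = a ∧ j = b) := by rintro ⟨rfl, rfl⟩; exact hab' rfl
    have n2 : ¬(j = b ∧ j = a) := by rintro ⟨rfl, rfl⟩; exact hab' rfl
    fin_cases k <;>
    · show ducChoi A B _ (j, j) = 0
      simp [ducChoi, blkTo, Prod.ext_iff, n1, n2]
  · have hab' : a < b := hab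
    have hce' : c < e := hce
    by_cases hpq : a = c ∧ b = e
    · obtain ⟨rfl, rfl⟩ := hpq
      obtain rfl : hab = hce := rfl
      rw [Matrix.blockDiagonal'_apply_eq]
      have hne : a ≠ b := ne_of_lt hab'
      fin_cases k <;> fin_cases l <;>
      · show ducChoi A B _ _ = _
        simp [ducChoi, blkTo, blkMat, Prod.ext_iff, hne, hne.symm]
    · have hne : (Sum.inr ⟨(a, b), hab⟩ : BlkIdx d) ≠ Sum.inr ⟨(c, e), hce⟩ := by
        intro hh
        apply hpq
        have h2 : ((a, b) : Fin d × Fin d) = (c, e) :=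
          congrArg Subtype.val (Sum.inr.inj hh)
        exact ⟨congrArg Prod.fst h2, congrArg Prod.snd h2⟩
      rw [Matrix.blockDiagonal'_apply_ne _ _ _ hne]
      have n1 : ¬(c = a ∧ e = b) := fun ⟨h1, h2⟩ => hpq ⟨h1.symm, h2.symm⟩
      have n2 : ¬(c = b ∧ e = a) := by
        rintro ⟨rfl, rfl⟩; exact absurd hce' (asymm hab')
      have n3 : ¬(e = a ∧ c = b) := by
        rintro ⟨rfl, rfl⟩; exact absurd hce' (asymm hab')
      have n4 : ¬(e = b ∧ c = a) := fun ⟨h1, h2⟩ => hpq ⟨h2.symm, h1.symm⟩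
      fin_cases k <;> fin_cases l <;>
      · show ducChoi A B _ _ = 0
        simp [ducChoi, blkTo, Prod.ext_iff, n1, n2, n3, n4]

lemma rank_one_by_one (a : ℂ) :
    (!![a] : Matrix (Fin 1) (Fin 1) ℂ).rank = if a ≠ 0 then 1 else 0 := by
  by_cases h : a = 0
  · subst h
    have h0 : (!![(0 : ℂ)] : Matrix (Fin 1) (Fin 1) ℂ) = 0 := by
      ext i j; fin_cases i; fin_cases j; rfl
    rw [h0, Matrix.rank_zero]
    simp
  · rw [if_pos h]
    have hu : IsUnit (!![a] : Matrix (Fin 1) (Fin 1) ℂ) := by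
      rw [Matrix.isUnit_iff_isUnit_det]
      rw [Matrix.det_fin_one]
      exact isUnit_iff_ne_zero.mpr h
    simpa using Matrix.rank_of_isUnit _ hu

lemma pair_sum (f : Fin d → Fin d → ℕ) :
    ∑ p : {p : Fin d × Fin d // p.1 < p.2}, f p.1.1 p.1.2 =
      ∑ j : Fin d, ∑ i ∈ Finset.Iio j, f i j := by
  rw [Finset.sum_sigma']
  refine Finset.sum_bij'
    (fun p _ => (⟨p.1.2, p.1.1⟩ : Σ _ : Fin d, Fin d))
    (fun x hx => ⟨(x.2, x.1), by simpa using (Finset.mem_sigma.mp hx).2⟩)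
    ?_ ?_ ?_ ?_ ?_ <;> simp

end DucAux

theorem stmt9 {d : ℕ} (A B : Matrix (Fin d) (Fin d) ℂ)
    (hA : ∀ i j, 0 ≤ (A i j).re ∧ (A i j).im = 0)
    (hB : B.IsHermitian)
    (hdiag : ∀ i, B i i = A i i)
    (hAB : ∀ i j, Complex.normSq (B i j) ≤ (A i j).re * (A j i).re) :
    (ducChoi A B).rank =
      Nat.card {i : Fin d // A i i ≠ 0} +
        ∑ j : Fin d, ∑ i ∈ Finset.Iio j,
          (!![A i j, B i j; B j i, A j i] : Matrix (Fin 2) (Fin 2) ℂ).rank := by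
  classical
  have h1 : (ducChoi A B).rank = (blockDiagonal' (blkMat A B)).rank := by
    rw [← duc_eq A B, Matrix.rank_submatrix]
  rw [h1, rank_blockDiagonal', Fintype.sum_sum_type]
  congr 1
  · have h2 : ∀ i : Fin d, (blkMat A B (Sum.inl i)).rank =
        if A i i ≠ 0 then 1 else 0 := fun i => rank_one_by_one (A i i)
    rw [Finset.sum_congr rfl (fun i _ => h2 i)]
    rw [Nat.card_eq_fintype_card, Fintype.card_subtype, Finset.card_filter]
  · exact pair_sum (fun i j => (!![A i j, B i j; B j i, A j i] : Matrix (Fin 2) (Fin 2) ℂ).rank)
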